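/- For any n, m ≥ 2: μ_t(L(K_{m,n})) = max{n,m}, μ_d(L(K_{m,n})) = n + m − 1, and μ_o(L(K_{m,n})) = n + m − 2. -/

import Mathlib

namespace MutualVisibility

open SimpleGraph

variable {V W : Type*}

/-- `x` and `y` are `X`-visible in `G`: there is a shortest `x,y`-path all of whose
internal vertices avoid `X`. -/
def Visible (G : SimpleGraph V) (X : Set V) (x y : V) : Prop :=
  ∃ p : G.Walk x y, p.length = G.dist x y ∧ ∀ v ∈ p.support, v ≠ x → v ≠ y → v ∉ X

/-- `X` is a mutual-visibility set: any two vertices of `X` are `X`-visible. -/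
def IsMutualVisSet (G : SimpleGraph V) (X : Set V) : Prop :=
  ∀ x ∈ X, ∀ y ∈ X, Visible G X x y

/-- outer mutual-visibility set -/
def IsOuterMutualVisSet (G : SimpleGraph V) (X : Set V) : Prop :=
  IsMutualVisSet G X ∧ ∀ x ∈ X, ∀ y ∉ X, Visible G X x y

/-- dual mutual-visibility set -/
def IsDualMutualVisSet (G : SimpleGraph V) (X : Set V) : Prop :=
  IsMutualVisSet G X ∧ ∀ x ∉ X, ∀ y ∉ X, Visible G X x y

/-- total mutual-visibility set -/
def IsTotalMutualVisSet (G : SimpleGraph V) (X : Set V) : Prop :=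
  ∀ x y : V, Visible G X x y

/-- mutual-visibility number μ(G) -/
noncomputable def mu (G : SimpleGraph V) : ℕ :=
  sSup {k | ∃ X : Set V, IsMutualVisSet G X ∧ X.ncard = k}

/-- outer mutual-visibility number μ_o(G) -/
noncomputable def muOuter (G : SimpleGraph V) : ℕ :=
  sSup {k | ∃ X : Set V, IsOuterMutualVisSet G X ∧ X.ncard = k}

/-- dual mutual-visibility number μ_d(G) -/
noncomputable def muDual (G : SimpleGraph V) : ℕ :=
  sSup {k | ∃ X : Set V, IsDualMutualVisSet G X ∧ X.ncard = k}

/-- total mutual-visibility number μ_t(G) -/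
noncomputable def muTotal (G : SimpleGraph V) : ℕ :=
  sSup {k | ∃ X : Set V, IsTotalMutualVisSet G X ∧ X.ncard = k}

/-- `H` contains a subgraph copy of `F`. -/
def ContainsCopy (F : SimpleGraph W) (H : SimpleGraph V) : Prop :=
  ∃ f : W → V, Function.Injective f ∧ ∀ a b, F.Adj a b → H.Adj (f a) (f b)

/-- The Turán number ex(n; F): max number of edges of an `n`-vertex graph with no copy of `F`. -/
noncomputable def exNum (n : ℕ) (F : SimpleGraph W) : ℕ :=
  sSup {k | ∃ H : SimpleGraph (Fin n), ¬ ContainsCopy F H ∧ H.edgeSet.ncard = k}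

/-- The direct (tensor/categorical) product of graphs. -/
def directProd (G : SimpleGraph V) (H : SimpleGraph W) : SimpleGraph (V × W) where
  Adj x y := G.Adj x.1 y.1 ∧ H.Adj x.2 y.2
  symm := ⟨fun _ _ h => ⟨h.1.symm, h.2.symm⟩⟩
  loopless := ⟨fun x h => G.irrefl h.1⟩

/-- The join `G + H` of two graphs. -/
def graphJoin (G : SimpleGraph V) (H : SimpleGraph W) : SimpleGraph (V ⊕ W) where
  Adj u v := match u, v with
    | Sum.inl a, Sum.inl b => G.Adj a b
    | Sum.inr a, Sum.inr b => H.Adj a b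
    | _, _ => True
  symm := ⟨fun u v => match u, v with
    | Sum.inl _, Sum.inl _ => fun h => G.adj_symm h
    | Sum.inr _, Sum.inr _ => fun h => H.adj_symm h
    | Sum.inl _, Sum.inr _ => fun _ => trivial
    | Sum.inr _, Sum.inl _ => fun _ => trivial⟩
  loopless := ⟨fun u => match u with
    | Sum.inl _ => fun h => G.irrefl h
    | Sum.inr _ => fun h => H.irrefl h⟩

/-- A big-μ graph: `G = (K_1 ∪ K_t) + H` for some `t ≥ 0` and some graph `H`. -/
def IsBigMu {V : Type} (G : SimpleGraph V) : Prop :=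
  ∃ (t : ℕ) (W : Type) (H : SimpleGraph W),
    Nonempty (G ≃g graphJoin ((⊤ : SimpleGraph (Fin 1)) ⊕g (⊤ : SimpleGraph (Fin t))) H)

/-- A cograph: a graph with no induced path on four vertices. -/
def IsCograph (G : SimpleGraph V) : Prop :=
  ¬ ∃ f : Fin 4 → V, Function.Injective f ∧
      ∀ a b, (pathGraph 4).Adj a b ↔ G.Adj (f a) (f b)

/-- The Petersen graph, realized as the Kneser graph K(5,2). -/
def petersen : SimpleGraph {s : Finset (Fin 5) // s.card = 2} where
  Adj a b := Disjoint a.1 b.1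
  symm := ⟨fun _ _ h => h.symm⟩
  loopless := by
    refine ⟨?_⟩
    rintro ⟨s, hs⟩ h
    rw [disjoint_self, Finset.bot_eq_empty] at h
    subst h
    simp at hs

def rook (m n : ℕ) : SimpleGraph (Fin m × Fin n) where
  Adj p q := p ≠ q ∧ (p.1 = q.1 ∨ p.2 = q.2)
  symm := ⟨by rintro p q ⟨h1, h2⟩; exact ⟨h1.symm, by tauto⟩⟩
  loopless := ⟨by rintro p ⟨h1, _⟩; exact h1 rfl⟩

def genpos {m n : ℕ} (p q : Fin m × Fin n) : Prop := p.1 ≠ q.1 ∧ p.2 ≠ q.2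

variable {m n : ℕ} {p q z : Fin m × Fin n} {X : Set (Fin m × Fin n)}

lemma rook_adj : (rook m n).Adj p q ↔ p ≠ q ∧ (p.1 = q.1 ∨ p.2 = q.2) := Iff.rfl

lemma genpos_ne (h : genpos p q) : p ≠ q := fun he => h.1 (by rw [he])

lemma genpos_not_adj (h : genpos p q) : ¬ (rook m n).Adj p q := by
  rintro ⟨-, h2 | h2⟩; exacts [h.1 h2, h.2 h2]

lemma adj_of_not_genpos (hne : p ≠ q) (h : ¬ genpos p q) : (rook m n).Adj p q := by
  refine ⟨hne, ?_⟩
  by_contra hc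
  push_neg at hc
  exact h ⟨hc.1, hc.2⟩

lemma genpos_adj_corner1 (h : genpos p q) :
    (rook m n).Adj p (p.1, q.2) ∧ (rook m n).Adj (p.1, q.2) q := by
  constructor
  · exact ⟨fun he => h.2 (by rw [he]), Or.inl rfl⟩
  · exact ⟨fun he => h.1 (by rw [← he]), Or.inr rfl⟩

lemma dist_genpos (h : genpos p q) : (rook m n).dist p q = 2 := by
  obtain ⟨h1, h2⟩ := genpos_adj_corner1 h
  have hle : (rook m n).dist p q ≤ 2 := by
    simpa using SimpleGraph.dist_le (.cons h1 (.cons h2 .nil))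
  have h0 : (rook m n).dist p q ≠ 0 :=
    SimpleGraph.dist_ne_zero_iff_ne_and_reachable.2
      ⟨genpos_ne h, (SimpleGraph.Walk.cons h1 (.cons h2 .nil)).reachable⟩
  have h1' : (rook m n).dist p q ≠ 1 := by
    rw [ne_eq, SimpleGraph.dist_eq_one_iff_adj]
    exact genpos_not_adj h
  omega

lemma walk_len2 {V : Type*} {G : SimpleGraph V} {x y : V} (p : G.Walk x y) (h : p.length = 2) :
    ∃ z, ∃ (_ : G.Adj x z) (_ : G.Adj z y), p.support = [x, z, y] := by
  match p with
  | .nil => simp at h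
  | .cons h1 q =>
    match q with
    | .nil => simp at h
    | .cons h2 r =>
      match r with
      | .nil => exact ⟨_, h1, h2, by simp⟩
      | .cons h3 s => simp [SimpleGraph.Walk.length_cons] at h

lemma common_nbr (h : genpos p q) (h1 : (rook m n).Adj p z) (h2 : (rook m n).Adj z q) :
    z = (p.1, q.2) ∨ z = (q.1, p.2) := by
  obtain ⟨hz1, e1 | e1⟩ := h1 <;> obtain ⟨hz2, e2 | e2⟩ := h2
  · exact absurd (e1.trans e2) h.1
  · left; exact Prod.ext e1.symm e2
  · right; exact Prod.ext e2 e1.symm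
  · exact absurd (e1.trans e2) h.2

lemma visible_of_eq (h : p = q) : Visible (rook m n) X p q := by
  subst h
  exact ⟨.nil, by simp [SimpleGraph.dist_self], by simp⟩

lemma visible_of_adj (h : (rook m n).Adj p q) : Visible (rook m n) X p q := by
  refine ⟨.cons h .nil, by simp [SimpleGraph.dist_eq_one_iff_adj.2 h], ?_⟩
  intro v hv hvp hvq
  simp [SimpleGraph.Walk.support_cons] at hv
  rcases hv with rfl | rfl
  exacts [absurd rfl hvp, absurd rfl hvq]

lemma visible_of_not_genpos (h : ¬ genpos p q) : Visible (rook m n) X p q := by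
  by_cases he : p = q
  · exact visible_of_eq he
  · exact visible_of_adj (adj_of_not_genpos he h)

lemma visible_iff (h : genpos p q) :
    Visible (rook m n) X p q ↔ ((p.1, q.2) ∉ X ∨ (q.1, p.2) ∉ X) := by
  constructor
  · rintro ⟨w, hl, hs⟩
    rw [dist_genpos h] at hl
    obtain ⟨z, h1, h2, hsup⟩ := walk_len2 w hl
    have hz : z ∉ X := hs z (by rw [hsup]; simp) h1.ne' h2.ne
    rcases common_nbr h h1 h2 with rfl | rfl
    · exact Or.inl hz
    · exact Or.inr hz
  · intro hc
    have hc1 := genpos_adj_corner1 h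
    have h' : genpos q p := ⟨h.1.symm, h.2.symm⟩
    have hc2 := genpos_adj_corner1 h'
    rcases hc with hz | hz
    · refine ⟨.cons hc1.1 (.cons hc1.2 .nil), by simp [dist_genpos h], ?_⟩
      intro v hv hvp hvq
      simp [SimpleGraph.Walk.support_cons] at hv
      rcases hv with rfl | rfl | rfl
      exacts [absurd rfl hvp, hz, absurd rfl hvq]
    · refine ⟨.cons hc2.2.symm (.cons hc2.1.symm .nil), by simp [dist_genpos h], ?_⟩
      intro v hv hvp hvq
      simp [SimpleGraph.Walk.support_cons] at hv
      rcases hv with rfl | rfl | rfl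
      exacts [absurd rfl hvp, hz, absurd rfl hvq]

lemma genpos_corners (h : genpos p q) : genpos ((p.1, q.2) : Fin m × Fin n) (q.1, p.2) :=
  ⟨h.1, fun e => h.2 e.symm⟩

/-- total char -/
lemma total_iff :
    IsTotalMutualVisSet (rook m n) X ↔ ∀ p ∈ X, ∀ q ∈ X, ¬ genpos p q := by
  constructor
  · intro ht u hu v hv hg
    have := ht (u.1, v.2) (v.1, u.2)
    rw [visible_iff (genpos_corners hg)] at this
    simp only [Prod.mk.eta] at this
    rcases this with h | h
    exacts [h hu, h hv]
  · intro hX p q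
    by_cases hg : genpos p q
    · rw [visible_iff hg]
      by_contra hc
      push_neg at hc
      exact hX _ hc.1 _ hc.2 (genpos_corners hg)
    · exact visible_of_not_genpos hg

lemma subset_row_or_col (hm : 0 < m) (h : ∀ p ∈ X, ∀ q ∈ X, ¬ genpos p q) :
    (∃ a, ∀ p ∈ X, p.1 = a) ∨ (∃ b, ∀ p ∈ X, p.2 = b) := by
  by_cases hr : ∃ p ∈ X, ∃ q ∈ X, p.1 ≠ q.1
  · obtain ⟨p, hp, q, hq, hpq⟩ := hr
    right
    refine ⟨p.2, fun z hz => ?_⟩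
    by_cases hz1 : z.1 = p.1
    · by_contra hz2
      have : z.1 ≠ q.1 := fun e => hpq (hz1 ▸ e)
      have h2 : z.2 ≠ q.2 := by
        intro e
        -- then p and q... use pair (z, p)? we have z.1 = p.1, z.2 ≠ p.2
        -- pair (p,q): p.1 ≠ q.1; need p.2 ≠ q.2? p.2 ≠ z.2 = q.2
        exact h p hp q hq ⟨hpq, fun e2 => hz2 (e ▸ e2.symm ▸ rfl)⟩
      exact h z hz q hq ⟨this, h2⟩
    · by_contra hz2
      exact h z hz p hp ⟨hz1, hz2⟩
  · push_neg at hr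
    left
    rcases X.eq_empty_or_nonempty with rfl | ⟨w, hw⟩
    · exact ⟨⟨0, hm⟩, by simp⟩
    · exact ⟨w.1, fun p hp => hr p hp w hw⟩

lemma ncard_row (a : Fin m) : {p : Fin m × Fin n | p.1 = a}.ncard = n := by
  have : {p : Fin m × Fin n | p.1 = a} = (fun j => (a, j)) '' Set.univ := by
    ext p
    simp only [Set.mem_setOf_eq, Set.image_univ, Set.mem_range]
    constructor
    · intro h; exact ⟨p.2, Prod.ext h.symm rfl⟩
    · rintro ⟨j, rfl⟩; rfl
  rw [this, Set.ncard_image_of_injective _ (fun x y h => by simpa using congrArg Prod.snd h),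
    Set.ncard_univ]
  simp

lemma ncard_col (b : Fin n) : {p : Fin m × Fin n | p.2 = b}.ncard = m := by
  have : {p : Fin m × Fin n | p.2 = b} = (fun i => (i, b)) '' Set.univ := by
    ext p
    simp only [Set.mem_setOf_eq, Set.image_univ, Set.mem_range]
    constructor
    · intro h; exact ⟨p.1, Prod.ext rfl h.symm⟩
    · rintro ⟨j, rfl⟩; rfl
  rw [this, Set.ncard_image_of_injective _ (fun x y h => by simpa using congrArg Prod.fst h),
    Set.ncard_univ]
  simp

lemma ncard_cross (a : Fin m) (b : Fin n) :
    {p : Fin m × Fin n | p.1 = a ∨ p.2 = b}.ncard = m + n - 1 := by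
  have hu : {p : Fin m × Fin n | p.1 = a ∨ p.2 = b}
      = {p : Fin m × Fin n | p.1 = a} ∪ {p | p.2 = b} := rfl
  have hi : ({p : Fin m × Fin n | p.1 = a} ∩ {p | p.2 = b}) = {(a, b)} := by
    ext p
    simp only [Set.mem_inter_iff, Set.mem_setOf_eq, Set.mem_singleton_iff]
    constructor
    · rintro ⟨h1, h2⟩; exact Prod.ext h1 h2
    · rintro rfl; exact ⟨rfl, rfl⟩
  have := Set.ncard_union_add_ncard_inter {p : Fin m × Fin n | p.1 = a} {p | p.2 = b}
    (Set.toFinite _) (Set.toFinite _)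
  rw [hi, ncard_row, ncard_col, Set.ncard_singleton] at this
  rw [hu]
  omega

lemma bent_eq (a : Fin m) (b : Fin n) :
    {p : Fin m × Fin n | (p.1 = a ∧ p.2 ≠ b) ∨ (p.2 = b ∧ p.1 ≠ a)}
      = {p : Fin m × Fin n | p.1 = a ∨ p.2 = b} \ {(a, b)} := by
  ext p
  simp only [Set.mem_setOf_eq, Set.mem_diff, Set.mem_singleton_iff]
  constructor
  · rintro (⟨h1, h2⟩ | ⟨h1, h2⟩)
    · exact ⟨Or.inl h1, fun e => h2 (by rw [e])⟩
    · exact ⟨Or.inr h1, fun e => h2 (by rw [e])⟩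
  · rintro ⟨h1 | h1, h2⟩
    · exact Or.inl ⟨h1, fun e => h2 (Prod.ext h1 e)⟩
    · by_cases h3 : p.1 = a
      · exact Or.inl ⟨h3, fun e => h2 (Prod.ext h3 e)⟩
      · exact Or.inr ⟨h1, h3⟩

lemma ncard_bent (a : Fin m) (b : Fin n) :
    {p : Fin m × Fin n | (p.1 = a ∧ p.2 ≠ b) ∨ (p.2 = b ∧ p.1 ≠ a)}.ncard = m + n - 2 := by
  rw [bent_eq, Set.ncard_diff_singleton_of_mem (by simp), ncard_cross]
  omega

section constructions
variable (a0 : Fin m) (b0 : Fin n)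

lemma total_row : IsTotalMutualVisSet (rook m n) {p | p.1 = a0} := by
  rw [total_iff]
  intro p hp q hq hg
  exact hg.1 (hp.trans hq.symm)

lemma total_col : IsTotalMutualVisSet (rook m n) {p | p.2 = b0} := by
  rw [total_iff]
  intro p hp q hq hg
  exact hg.2 (hp.trans hq.symm)

lemma dual_cross : IsDualMutualVisSet (rook m n) {p | p.1 = a0 ∨ p.2 = b0} := by
  constructor
  · intro p hp q hq
    by_cases hg : genpos p q
    · rw [visible_iff hg]
      by_contra hc
      push_neg at hc
      obtain ⟨hc1, hc2⟩ := hc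
      simp only [Set.mem_setOf_eq] at hp hq hc1 hc2
      rcases hc1 with h1 | h1 <;> rcases hc2 with h2 | h2
      · exact hg.1 (h1.trans h2.symm)
      · -- p.1 = a0, p.2 = b0, so p = (a0,b0); q ∈ X contradicts genpos
        rcases hq with h3 | h3
        · exact hg.1 (h1.trans h3.symm)
        · exact hg.2 (h2.trans h3.symm)
      · rcases hp with h3 | h3
        · exact hg.1 (h3.trans h2.symm)
        · exact hg.2 (h3.trans h1.symm)
      · exact hg.2 (h2.trans h1.symm)
    · exact visible_of_not_genpos hg
  · intro p hp q hq
    by_cases hg : genpos p q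
    · rw [visible_iff hg]
      simp only [Set.mem_setOf_eq, not_or] at hp hq ⊢
      exact Or.inl ⟨hp.1, hq.2⟩
    · exact visible_of_not_genpos hg

lemma outer_bent :
    IsOuterMutualVisSet (rook m n) {p | (p.1 = a0 ∧ p.2 ≠ b0) ∨ (p.2 = b0 ∧ p.1 ≠ a0)} := by
  constructor
  · intro p hp q hq
    by_cases hg : genpos p q
    · rw [visible_iff hg]
      simp only [Set.mem_setOf_eq] at hp hq
      rcases hp with ⟨h1, h2⟩ | ⟨h1, h2⟩ <;> rcases hq with ⟨h3, h4⟩ | ⟨h3, h4⟩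
      · exact absurd (h1.trans h3.symm) hg.1
      · left
        rintro (⟨e1, e2⟩ | ⟨e1, e2⟩)
        exacts [e2 h3, e2 h1]
      · right
        rintro (⟨e1, e2⟩ | ⟨e1, e2⟩)
        exacts [e2 h1, e2 h3]
      · exact absurd (h1.trans h3.symm) hg.2
    · exact visible_of_not_genpos hg
  · intro p hp q hq
    by_cases hg : genpos p q
    · rw [visible_iff hg]
      simp only [Set.mem_setOf_eq, not_or, not_and, not_not] at hp hq
      obtain ⟨hq1, hq2⟩ := hq
      rcases hp with ⟨h1, h2⟩ | ⟨h1, h2⟩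
      · -- p row type; corner2 = (q.1, p.2) ∉ O since p.2 ≠ b0 and q.1 ≠ a0
        right
        have hqa : q.1 ≠ a0 := fun e => hg.1 (h1.trans e.symm)
        rintro (⟨e1, e2⟩ | ⟨e1, e2⟩)
        exacts [hqa e1, h2 e1]
      · -- p col type; corner1 = (p.1, q.2) ∉ O
        left
        have hqb : q.2 ≠ b0 := fun e => hg.2 (h1.trans e.symm)
        rintro (⟨e1, e2⟩ | ⟨e1, e2⟩)
        exacts [h2 e1, hqb e1]
    · exact visible_of_not_genpos hg

end constructions

/-- Exactly-one-corner property for dual sets. -/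
lemma dualE (hd : IsDualMutualVisSet (rook m n) X) :
    ∀ p ∈ X, ∀ q ∈ X, genpos p q →
      (((p.1, q.2) ∈ X ∧ (q.1, p.2) ∉ X) ∨ ((p.1, q.2) ∉ X ∧ (q.1, p.2) ∈ X)) := by
  intro p hp q hq hg
  have h1 := (visible_iff hg).1 (hd.1 p hp q hq)
  by_cases hc1 : (p.1, q.2) ∈ X
  · left
    exact ⟨hc1, by tauto⟩
  · right
    refine ⟨hc1, ?_⟩
    by_contra hc2
    have h2 := (visible_iff (genpos_corners hg)).1 (hd.2 _ hc1 _ hc2)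
    simp only [Prod.mk.eta] at h2
    rcases h2 with h | h
    exacts [h hp, h hq]

/-- key classification: an L-configuration forces X inside a cross. -/
lemma lemB
    (E : ∀ p ∈ X, ∀ q ∈ X, genpos p q →
      (((p.1, q.2) ∈ X ∧ (q.1, p.2) ∉ X) ∨ ((p.1, q.2) ∉ X ∧ (q.1, p.2) ∈ X)))
    {a c : Fin m} {b d : Fin n} (hac : a ≠ c) (hbd : b ≠ d)
    (hA : (a, b) ∈ X) (hB : (a, d) ∈ X) (hC : (c, d) ∈ X) :
    ∀ p ∈ X, p.1 = a ∨ p.2 = d := by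
  have hcb : (c, b) ∉ X := by
    rcases E (a, b) hA (c, d) hC ⟨hac, hbd⟩ with ⟨h1, h2⟩ | ⟨h1, h2⟩
    · exact h2
    · exact absurd hB h1
  rintro ⟨e, f⟩ hz
  by_contra hcon
  push_neg at hcon
  obtain ⟨he, hf⟩ := hcon
  simp only at he hf
  by_cases hec : e = c
  · subst hec
    have haf : (a, f) ∉ X := by
      rcases E (e, f) hz (a, d) hB ⟨he, hf⟩ with ⟨h1, h2⟩ | ⟨h1, h2⟩
      · exact h2
      · exact absurd hC h1
    have hfb : f ≠ b := fun hh => hcb (hh ▸ hz)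
    rcases E (e, f) hz (a, b) hA ⟨he, hfb⟩ with ⟨h1, h2⟩ | ⟨h1, h2⟩
    · exact hcb h1
    · exact haf h2
  · rcases E (e, f) hz (a, d) hB ⟨he, hf⟩ with ⟨h1, h2⟩ | ⟨h1, h2⟩
    · -- (e,d) ∈ X, (a,f) ∉ X
      have heb : (e, b) ∉ X := by
        rcases E (e, d) h1 (a, b) hA ⟨he, fun hh => hbd hh.symm⟩ with ⟨h3, h4⟩ | ⟨h3, h4⟩
        · exact absurd hB h4
        · exact h3
      have hfb : f ≠ b := fun hh => heb (hh ▸ hz)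
      rcases E (e, f) hz (a, b) hA ⟨he, hfb⟩ with ⟨h3, h4⟩ | ⟨h3, h4⟩
      · exact heb h3
      · exact h2 h4
    · -- (e,d) ∉ X, (a,f) ∈ X
      have hcf : (c, f) ∉ X := by
        rcases E (a, f) h2 (c, d) hC ⟨hac, hf⟩ with ⟨h3, h4⟩ | ⟨h3, h4⟩
        · exact h4
        · exact absurd hB h3
      rcases E (e, f) hz (c, d) hC ⟨hec, hf⟩ with ⟨h3, h4⟩ | ⟨h3, h4⟩
      · exact h1 h3
      · exact hcf h4

lemma dual_card (hm : 2 ≤ m) (hn : 2 ≤ n) (hd : IsDualMutualVisSet (rook m n) X) :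
    X.ncard ≤ m + n - 1 := by
  by_cases hall : ∀ p ∈ X, ∀ q ∈ X, ¬ genpos p q
  · rcases subset_row_or_col (by omega) hall with ⟨a, ha⟩ | ⟨b, hb⟩
    · have := Set.ncard_le_ncard (show X ⊆ {p : Fin m × Fin n | p.1 = a} from ha)
        (Set.toFinite _)
      rw [ncard_row] at this
      omega
    · have := Set.ncard_le_ncard (show X ⊆ {p : Fin m × Fin n | p.2 = b} from hb)
        (Set.toFinite _)
      rw [ncard_col] at this
      omega
  · push_neg at hall
    obtain ⟨p, hp, q, hq, hg⟩ := hall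
    have E := dualE hd
    have hsub : ∃ a d, ∀ z ∈ X, z.1 = a ∨ z.2 = d := by
      rcases E p hp q hq hg with ⟨h1, h2⟩ | ⟨h1, h2⟩
      · exact ⟨p.1, q.2, lemB E hg.1 hg.2 (by simpa using hp) h1 (by simpa using hq)⟩
      · exact ⟨q.1, p.2, lemB E (fun hh => hg.1 hh.symm) (fun hh => hg.2 hh.symm)
          (by simpa using hq) h2 (by simpa using hp)⟩
    obtain ⟨a, d, hsub⟩ := hsub
    have := Set.ncard_le_ncard (show X ⊆ {z : Fin m × Fin n | z.1 = a ∨ z.2 = d} from hsub)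
      (Set.toFinite _)
    rw [ncard_cross] at this
    exact this

lemma outerNoL (ho : IsOuterMutualVisSet (rook m n) X) {a c : Fin m} {b d : Fin n}
    (hac : a ≠ c) (hbd : b ≠ d)
    (h1 : (a, b) ∈ X) (h2 : (a, d) ∈ X) (h3 : (c, b) ∈ X) : False := by
  by_cases h4 : (c, d) ∈ X
  · have := (visible_iff (show genpos ((a, b) : Fin m × Fin n) (c, d) from ⟨hac, hbd⟩)).1
      (ho.1 _ h1 _ h4)
    simp only at this
    rcases this with h | h
    exacts [h h2, h h3]
  · have := (visible_iff (show genpos ((a, b) : Fin m × Fin n) (c, d) from ⟨hac, hbd⟩)).1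
      (ho.2 _ h1 _ h4)
    simp only at this
    rcases this with h | h
    exacts [h h2, h h3]

lemma outer_card (hm : 2 ≤ m) (hn : 2 ≤ n) (ho : IsOuterMutualVisSet (rook m n) X) :
    X.ncard ≤ m + n - 2 := by
  classical
  by_cases hrow : ∀ p ∈ X, ∀ q ∈ X, p.1 = q.1 → p = q
  · have : X.ncard ≤ m := by
      have := Set.ncard_le_ncard_of_injOn Prod.fst
        (fun a _ => Set.mem_univ a.1) (fun p hp q hq h => hrow p hp q hq h) Set.finite_univ
      simpa [Set.ncard_univ] using this
    omega
  by_cases hcol : ∀ p ∈ X, ∀ q ∈ X, p.2 = q.2 → p = q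
  · have : X.ncard ≤ n := by
      have := Set.ncard_le_ncard_of_injOn Prod.snd
        (fun a _ => Set.mem_univ a.2) (fun p hp q hq h => hcol p hp q hq h) Set.finite_univ
      simpa [Set.ncard_univ] using this
    omega
  push_neg at hrow hcol
  obtain ⟨p0, hp0, q0, hq0, hpq1, hpq2⟩ := hrow
  obtain ⟨u0, hu0, v0, hv0, huv1, huv2⟩ := hcol
  -- every element of X with a row-mate avoids column u0.2; others avoid row p0.1
  set f : Fin m × Fin n → Fin m ⊕ Fin n :=
    fun p => if ∃ q ∈ X, q.1 = p.1 ∧ q ≠ p then Sum.inr p.2 else Sum.inl p.1 with hf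
  have rowmate : ∀ z ∈ X, ∀ q ∈ X, q.1 = z.1 → q ≠ z → q.2 ≠ z.2 :=
    fun z hz q hq h1 h2 h3 => h2 (Prod.ext h1 h3)
  have colmate : ∀ z ∈ X, ∀ q ∈ X, q.2 = z.2 → q ≠ z → q.1 ≠ z.1 :=
    fun z hz q hq h1 h2 h3 => h2 (Prod.ext h3 h1)
  -- no cell has both a row-mate and a col-mate
  have key : ∀ z ∈ X, ∀ q ∈ X, q.1 = z.1 → q ≠ z → ∀ w ∈ X, w.2 = z.2 → w ≠ z → False := by
    intro z hz q hq hq1 hq2 w hw hw1 hw2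
    refine outerNoL ho (colmate z hz w hw hw1 hw2).symm (rowmate z hz q hq hq1 hq2).symm
      (by simpa using hz) ?_ ?_
    · have : q = (z.1, q.2) := Prod.ext hq1 rfl
      exact this ▸ hq
    · have : w = (w.1, z.2) := Prod.ext rfl hw1
      exact this ▸ hw
  have hmaps : ∀ z ∈ X, f z ∈ (Sum.inl '' {x | x ≠ p0.1} ∪ Sum.inr '' {y | y ≠ u0.2}) := by
    intro z hz
    by_cases hex : ∃ q ∈ X, q.1 = z.1 ∧ q ≠ z
    · obtain ⟨q, hq, hq1, hq2⟩ := hex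
      have hfz : f z = Sum.inr z.2 := by simp only [hf, if_pos (⟨q, hq, hq1, hq2⟩ :
        ∃ q ∈ X, q.1 = z.1 ∧ q ≠ z)]
      rw [hfz]
      right
      refine ⟨z.2, ?_, rfl⟩
      -- z.2 ≠ c0
      intro hzc
      -- z has a col-mate among u0, v0
      by_cases hu : u0 = z
      · have hv : v0 ≠ z := fun hh => huv2 (hu.trans hh.symm) |>.elim
        exact key z hz q hq hq1 hq2 v0 hv0 (huv1.symm.trans hzc.symm) hv
      · exact key z hz q hq hq1 hq2 u0 hu0 hzc.symm hu
    · have hfz : f z = Sum.inl z.1 := by simp only [hf, if_neg hex]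
      rw [hfz]
      left
      refine ⟨z.1, ?_, rfl⟩
      intro hzr
      -- z is in row r0, which has two cells p0 ≠ q0
      by_cases hp : p0 = z
      · have hq : q0 ≠ z := fun hh => hpq2 (hp.trans hh.symm) |>.elim
        exact hex ⟨q0, hq0, hpq1.symm.trans hzr.symm, hq⟩
      · exact hex ⟨p0, hp0, hzr.symm, hp⟩
  have hinj : Set.InjOn f X := by
    intro z hz w hw hfzw
    by_contra hne
    by_cases hexz : ∃ q ∈ X, q.1 = z.1 ∧ q ≠ z <;>
      by_cases hexw : ∃ q ∈ X, q.1 = w.1 ∧ q ≠ w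
    · have e1 : f z = Sum.inr z.2 := by simp only [hf, if_pos hexz]
      have e2 : f w = Sum.inr w.2 := by simp only [hf, if_pos hexw]
      rw [e1, e2] at hfzw
      have hzw2 : z.2 = w.2 := Sum.inr.inj hfzw
      obtain ⟨q, hq, hq1, hq2⟩ := hexz
      exact key z hz q hq hq1 hq2 w hw hzw2.symm (fun hh => hne hh.symm)
    · have e1 : f z = Sum.inr z.2 := by simp only [hf, if_pos hexz]
      have e2 : f w = Sum.inl w.1 := by simp only [hf, if_neg hexw]
      rw [e1, e2] at hfzw
      cases hfzw
    · have e1 : f z = Sum.inl z.1 := by simp only [hf, if_neg hexz]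
      have e2 : f w = Sum.inr w.2 := by simp only [hf, if_pos hexw]
      rw [e1, e2] at hfzw
      cases hfzw
    · have e1 : f z = Sum.inl z.1 := by simp only [hf, if_neg hexz]
      have e2 : f w = Sum.inl w.1 := by simp only [hf, if_neg hexw]
      rw [e1, e2] at hfzw
      have hzw1 : z.1 = w.1 := Sum.inl.inj hfzw
      exact hexz ⟨w, hw, hzw1.symm, fun hh => hne hh.symm⟩
  have htarget : (Sum.inl '' {x | x ≠ p0.1} ∪ Sum.inr '' {y | y ≠ u0.2} :
      Set (Fin m ⊕ Fin n)).ncard = (m - 1) + (n - 1) := by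
    rw [Set.ncard_union_eq (by
        rw [Set.disjoint_left]
        rintro s ⟨x, hx, rfl⟩ ⟨y, hy, hh⟩
        cases hh) (Set.toFinite _) (Set.toFinite _),
      Set.ncard_image_of_injective _ Sum.inl_injective,
      Set.ncard_image_of_injective _ Sum.inr_injective]
    have e1 : ({x | x ≠ p0.1} : Set (Fin m)) = Set.univ \ {p0.1} := by
      ext x; simp
    have e2 : ({y | y ≠ u0.2} : Set (Fin n)) = Set.univ \ {u0.2} := by
      ext y; simp
    rw [e1, e2, Set.ncard_diff_singleton_of_mem (Set.mem_univ _),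
      Set.ncard_diff_singleton_of_mem (Set.mem_univ _)]
    simp [Set.ncard_univ]
  have := Set.ncard_le_ncard_of_injOn f hmaps hinj (Set.toFinite _)
  rw [htarget] at this
  omega

lemma total_card (hm : 2 ≤ m) (ht : IsTotalMutualVisSet (rook m n) X) :
    X.ncard ≤ max n m := by
  rcases subset_row_or_col (by omega) (total_iff.1 ht) with ⟨a, ha⟩ | ⟨b, hb⟩
  · have := Set.ncard_le_ncard (show X ⊆ {p : Fin m × Fin n | p.1 = a} from ha)
      (Set.toFinite _)
    rw [ncard_row] at this
    exact this.trans (le_max_left _ _)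
  · have := Set.ncard_le_ncard (show X ⊆ {p : Fin m × Fin n | p.2 = b} from hb)
      (Set.toFinite _)
    rw [ncard_col] at this
    exact this.trans (le_max_right _ _)

lemma sSup_eq_of_mem_of_le {S : Set ℕ} {k : ℕ} (h1 : k ∈ S) (h2 : ∀ j ∈ S, j ≤ k) :
    sSup S = k :=
  le_antisymm (csSup_le ⟨k, h1⟩ h2) (le_csSup ⟨k, h2⟩ h1)

section transfer
variable {V W : Type*} {G : SimpleGraph V} {H : SimpleGraph W}

lemma iso_dist_le (e : G ≃g H) (x y : V) : H.dist (e x) (e y) ≤ G.dist x y := by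
  by_cases h0 : G.dist x y = 0
  · rw [h0]
    rcases SimpleGraph.dist_eq_zero_iff_eq_or_not_reachable.1 h0 with rfl | hr
    · simp [SimpleGraph.dist_self]
    · rw [Nat.le_zero, SimpleGraph.dist_eq_zero_iff_eq_or_not_reachable]
      right
      intro hre
      have h2 := hre.map e.symm.toHom
      have ex : e.symm.toHom (e x) = x := e.symm_apply_apply x
      have ey : e.symm.toHom (e y) = y := e.symm_apply_apply y
      rw [ex, ey] at h2
      exact hr h2
  · obtain ⟨p, hp⟩ := SimpleGraph.exists_walk_of_dist_ne_zero h0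
    calc H.dist (e x) (e y) ≤ (p.map e.toHom).length := SimpleGraph.dist_le _
    _ = G.dist x y := by rw [SimpleGraph.Walk.length_map, hp]

lemma iso_dist_eq (e : G ≃g H) (x y : V) : H.dist (e x) (e y) = G.dist x y := by
  refine le_antisymm (iso_dist_le e x y) ?_
  have := iso_dist_le e.symm (e x) (e y)
  simpa using this

lemma visible_map (e : G ≃g H) {X : Set V} {x y : V} (h : Visible G X x y) :
    Visible H (e '' X) (e x) (e y) := by
  obtain ⟨p, hl, hs⟩ := h
  refine ⟨p.map e.toHom, by rw [SimpleGraph.Walk.length_map, hl, iso_dist_eq], ?_⟩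
  intro v hv hvx hvy
  rw [SimpleGraph.Walk.support_map, List.mem_map] at hv
  obtain ⟨u, hu, rfl⟩ := hv
  have hux : u ≠ x := fun hh => hvx (by rw [hh]; rfl)
  have huy : u ≠ y := fun hh => hvy (by rw [hh]; rfl)
  intro hmem
  obtain ⟨w, hw, hwe⟩ := hmem
  have : w = u := e.toEquiv.injective hwe
  exact hs u hu hux huy (this ▸ hw)

lemma mem_image_iff (e : G ≃g H) {X : Set V} {x : V} : e x ∈ e '' X ↔ x ∈ X := by
  constructor
  · rintro ⟨w, hw, hwe⟩
    rwa [← e.toEquiv.injective hwe]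
  · intro h; exact ⟨x, h, rfl⟩

lemma total_map (e : G ≃g H) {X : Set V} (h : IsTotalMutualVisSet G X) :
    IsTotalMutualVisSet H (e '' X) := by
  intro x y
  have := visible_map e (h (e.symm x) (e.symm y))
  simpa using this

lemma mv_map (e : G ≃g H) {X : Set V} (h : IsMutualVisSet G X) :
    IsMutualVisSet H (e '' X) := by
  rintro x ⟨u, hu, rfl⟩ y ⟨v, hv, rfl⟩
  exact visible_map e (h u hu v hv)

lemma dual_map (e : G ≃g H) {X : Set V} (h : IsDualMutualVisSet G X) :
    IsDualMutualVisSet H (e '' X) := by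
  refine ⟨mv_map e h.1, ?_⟩
  intro x hx y hy
  have hx' : e.symm x ∉ X := fun hh => hx (by
    have := mem_image_iff e (X := X) (x := e.symm x) |>.2 hh
    simpa using this)
  have hy' : e.symm y ∉ X := fun hh => hy (by
    have := mem_image_iff e (X := X) (x := e.symm y) |>.2 hh
    simpa using this)
  have := visible_map e (h.2 _ hx' _ hy')
  simpa using this

lemma outer_map (e : G ≃g H) {X : Set V} (h : IsOuterMutualVisSet G X) :
    IsOuterMutualVisSet H (e '' X) := by
  refine ⟨mv_map e h.1, ?_⟩
  rintro x ⟨u, hu, rfl⟩ y hy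
  have hy' : e.symm y ∉ X := fun hh => hy (by
    have := mem_image_iff e (X := X) (x := e.symm y) |>.2 hh
    simpa using this)
  have := visible_map e (h.2 u hu _ hy')
  simpa using this

lemma kset_eq_total (e : G ≃g H) :
    {k | ∃ X, IsTotalMutualVisSet G X ∧ X.ncard = k}
      = {k | ∃ X, IsTotalMutualVisSet H X ∧ X.ncard = k} := by
  ext k
  constructor
  · rintro ⟨X, hX, rfl⟩
    exact ⟨e '' X, total_map e hX, Set.ncard_image_of_injective _ e.toEquiv.injective⟩
  · rintro ⟨X, hX, rfl⟩
    exact ⟨e.symm '' X, total_map e.symm hX,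
      Set.ncard_image_of_injective _ e.symm.toEquiv.injective⟩

lemma kset_eq_dual (e : G ≃g H) :
    {k | ∃ X, IsDualMutualVisSet G X ∧ X.ncard = k}
      = {k | ∃ X, IsDualMutualVisSet H X ∧ X.ncard = k} := by
  ext k
  constructor
  · rintro ⟨X, hX, rfl⟩
    exact ⟨e '' X, dual_map e hX, Set.ncard_image_of_injective _ e.toEquiv.injective⟩
  · rintro ⟨X, hX, rfl⟩
    exact ⟨e.symm '' X, dual_map e.symm hX,
      Set.ncard_image_of_injective _ e.symm.toEquiv.injective⟩

lemma kset_eq_outer (e : G ≃g H) :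
    {k | ∃ X, IsOuterMutualVisSet G X ∧ X.ncard = k}
      = {k | ∃ X, IsOuterMutualVisSet H X ∧ X.ncard = k} := by
  ext k
  constructor
  · rintro ⟨X, hX, rfl⟩
    exact ⟨e '' X, outer_map e hX, Set.ncard_image_of_injective _ e.toEquiv.injective⟩
  · rintro ⟨X, hX, rfl⟩
    exact ⟨e.symm '' X, outer_map e.symm hX,
      Set.ncard_image_of_injective _ e.symm.toEquiv.injective⟩

end transfer

section lineIso
variable (m n : ℕ)

abbrev KBip := completeBipartiteGraph (Fin m) (Fin n)

def edgeFun (p : Fin m × Fin n) : (KBip m n).edgeSet :=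
  ⟨s(Sum.inl p.1, Sum.inr p.2), by simp⟩

lemma edgeFun_bij : Function.Bijective (edgeFun m n) := by
  constructor
  · intro p q h
    have := Subtype.ext_iff.1 h
    simp only [edgeFun, Sym2.eq, Sym2.rel_iff', Prod.mk.injEq, Sum.inl.injEq, Sum.inr.injEq]
      at this
    rcases this with ⟨h1, h2⟩ | h
    · exact Prod.ext h1 h2
    · rw [Prod.ext_iff] at h
      exact absurd h.1 (by simp)
  · rintro ⟨e, he⟩
    induction e using Sym2.ind with
    | _ a b =>
      rw [SimpleGraph.mem_edgeSet] at he
      match a, b with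
      | Sum.inl i, Sum.inl j => simp at he
      | Sum.inl i, Sum.inr j => exact ⟨(i, j), rfl⟩
      | Sum.inr j, Sum.inl i => exact ⟨(i, j), Subtype.ext (Sym2.eq_swap)⟩
      | Sum.inr i, Sum.inr j => simp at he

noncomputable def rookIso : rook m n ≃g (KBip m n).lineGraph := by
  refine ⟨Equiv.ofBijective _ (edgeFun_bij m n), ?_⟩
  intro p q
  rw [SimpleGraph.lineGraph_adj_iff_exists]
  constructor
  · rintro ⟨hne, v, hv1, hv2⟩
    refine ⟨fun hh => hne (congrArg _ hh), ?_⟩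
    simp only [Equiv.ofBijective_apply, edgeFun, Sym2.mem_iff] at hv1 hv2
    rcases hv1 with rfl | rfl <;> rcases hv2 with h | h
    · exact Or.inl (Sum.inl.inj h)
    · cases h
    · cases h
    · exact Or.inr (Sum.inr.inj h)
  · rintro ⟨hne, h⟩
    refine ⟨fun hh => hne ((edgeFun_bij m n).1 hh), ?_⟩
    rcases h with h | h
    · exact ⟨Sum.inl p.1, by simp [edgeFun], by simp [edgeFun, h]⟩
    · exact ⟨Sum.inr p.2, by simp [edgeFun], by simp [edgeFun, h]⟩

end lineIso

theorem mv_numbers_lineGraph_complete_bipartite (n m : ℕ) (hn : 2 ≤ n) (hm : 2 ≤ m) :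
    muTotal (completeBipartiteGraph (Fin m) (Fin n)).lineGraph = max n m ∧
    muDual (completeBipartiteGraph (Fin m) (Fin n)).lineGraph = n + m - 1 ∧
    muOuter (completeBipartiteGraph (Fin m) (Fin n)).lineGraph = n + m - 2 := by
  have e := rookIso m n
  have a0 : Fin m := ⟨0, by omega⟩
  have b0 : Fin n := ⟨0, by omega⟩
  refine ⟨?_, ?_, ?_⟩
  · show sSup _ = _
    rw [← kset_eq_total e]
    refine sSup_eq_of_mem_of_le ?_ ?_
    · rcases le_total n m with h | h
      · exact ⟨{p | p.2 = b0}, total_col b0, by rw [ncard_col, max_eq_right h]⟩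
      · exact ⟨{p | p.1 = a0}, total_row a0, by rw [ncard_row, max_eq_left h]⟩
    · rintro j ⟨X, hX, rfl⟩
      exact total_card hm hX
  · show sSup _ = _
    rw [← kset_eq_dual e]
    refine sSup_eq_of_mem_of_le ?_ ?_
    · exact ⟨{p | p.1 = a0 ∨ p.2 = b0}, dual_cross a0 b0, by rw [ncard_cross]; omega⟩
    · rintro j ⟨X, hX, rfl⟩
      have := dual_card hm hn hX
      omega
  · show sSup _ = _
    rw [← kset_eq_outer e]
    refine sSup_eq_of_mem_of_le ?_ ?_
    · exact ⟨{p | (p.1 = a0 ∧ p.2 ≠ b0) ∨ (p.2 = b0 ∧ p.1 ≠ a0)}, outer_bent a0 b0,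
        by rw [ncard_bent]; omega⟩
    · rintro j ⟨X, hX, rfl⟩
      have := outer_card hm hn hX
      omega
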